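/- Let m ≥ 2 and let x_1, …, x_m be pairwise distinct points of ℝ^m. Then ∑_{r<s} log ‖x_r − x_s‖ ≤ (m(m−1)/2) · log( (2/√m) · √(∑_{s} ‖x_s‖²) ). -/

import Mathlib

lemma two_mul_card_lt_pairs (m : ℕ) :
    2 * ((Finset.univ.filter (fun p : Fin m × Fin m => p.1 < p.2)).card) = m * (m - 1) := by
  have h : (Finset.univ.filter (fun p : Fin m × Fin m => p.1 < p.2)).card
      = ∑ b : Fin m, (b : ℕ) := by
    rw [Finset.card_filter, Fintype.sum_prod_type_right]
    refine Finset.sum_congr rfl fun b _ => ?_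
    rw [← Finset.card_filter]
    have hfb : Finset.univ.filter (fun a : Fin m => a < b) = Finset.Iio b := by
      ext a; simp
    rw [hfb, Fin.card_Iio]
  rw [h, Fin.sum_univ_eq_sum_range (fun i => i) m, mul_comm, Finset.sum_range_id_mul_two]

/-- For `m ≥ 2` pairwise distinct points of `ℝ^m`,
`∑_{r<s} log ‖x_r − x_s‖ ≤ (m(m−1)/2) · log((2/√m)·√(∑_s ‖x_s‖²))`. -/
theorem sum_log_dist_le (m : ℕ) (hm : 2 ≤ m)
    (x : Fin m → EuclideanSpace ℝ (Fin m)) (hx : ∀ r s : Fin m, r ≠ s → x r ≠ x s) :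
    ∑ p ∈ Finset.univ.filter (fun p : Fin m × Fin m => p.1 < p.2),
        Real.log ‖x p.1 - x p.2‖ ≤
      ((m : ℝ) * ((m : ℝ) - 1) / 2) *
        Real.log ((2 / Real.sqrt m) * Real.sqrt (∑ s, ‖x s‖ ^ 2)) := by
  classical
  set z : Fin m × Fin m → ℝ := fun p => ‖x p.1 - x p.2‖ ^ 2 with hzdef
  set P := Finset.univ.filter (fun p : Fin m × Fin m => p.1 < p.2) with hPdef
  set S : ℝ := ∑ s, ‖x s‖ ^ 2 with hSdef
  have hmR : (2 : ℝ) ≤ (m : ℝ) := by exact_mod_cast hm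
  have hm0R : (0 : ℝ) < m := by linarith
  have hab : (⟨0, by omega⟩ : Fin m) ≠ (⟨1, by omega⟩ : Fin m) := by
    simp [Fin.ext_iff]
  have hS0 : 0 < S := by
    by_contra h
    push_neg at h
    have hall : ∀ s : Fin m, x s = 0 := by
      intro s
      have h1 : ‖x s‖ ^ 2 ≤ S :=
        Finset.single_le_sum (f := fun s => ‖x s‖ ^ 2) (fun i _ => sq_nonneg _)
          (Finset.mem_univ s)
      have : ‖x s‖ = 0 := by nlinarith [sq_nonneg ‖x s‖, norm_nonneg (x s)]
      simpa using this
    exact hx _ _ hab (by rw [hall, hall])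
  have hcard : 2 * P.card = m * (m - 1) := two_mul_card_lt_pairs m
  have hNpos : 0 < P.card := by
    have : 2 ≤ m * (m - 1) := by
      have := Nat.mul_le_mul hm (Nat.le_sub_one_of_lt (by omega) : 1 ≤ m - 1)
      omega
    omega
  set N : ℝ := (P.card : ℝ) with hNdef
  have hN0 : (0 : ℝ) < N := by rw [hNdef]; exact_mod_cast hNpos
  have hNR : N = (m : ℝ) * ((m : ℝ) - 1) / 2 := by
    have h1 : ((2 * P.card : ℕ) : ℝ) = ((m * (m - 1) : ℕ) : ℝ) := by exact_mod_cast hcard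
    push_cast [Nat.cast_sub (by omega : 1 ≤ m)] at h1
    rw [hNdef]; linarith
  have hzpos : ∀ p ∈ P, 0 < z p := by
    intro p hp
    have hlt : p.1 < p.2 := by
      have := hp; rw [hPdef, Finset.mem_filter] at this; exact this.2
    have hne : x p.1 - x p.2 ≠ 0 := sub_ne_zero.mpr (hx _ _ (ne_of_lt hlt))
    simp only [hzdef]
    exact pow_pos (norm_pos_iff.mpr hne) 2
  have hdouble : ∑ p : Fin m × Fin m, z p = 2 * (m : ℝ) * S - 2 * ‖∑ s, x s‖ ^ 2 := by
    rw [Fintype.sum_prod_type]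
    have hrow : ∀ r : Fin m, ∑ s, z (r, s)
        = (m : ℝ) * ‖x r‖ ^ 2 - 2 * (inner ℝ (x r) (∑ s, x s) : ℝ) + S := by
      intro r
      simp only [hzdef]
      have hns : ∀ s, ‖x r - x s‖ ^ 2 = ‖x r‖ ^ 2 - 2 * (inner ℝ (x r) (x s) : ℝ) + ‖x s‖ ^ 2 :=
        fun s => norm_sub_sq_real (x r) (x s)
      rw [Finset.sum_congr rfl fun s _ => hns s]
      rw [Finset.sum_add_distrib, Finset.sum_sub_distrib, Finset.sum_const, inner_sum,
        Finset.card_univ, Fintype.card_fin, nsmul_eq_mul, ← Finset.mul_sum]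
    rw [Finset.sum_congr rfl fun r _ => hrow r]
    rw [Finset.sum_add_distrib, Finset.sum_sub_distrib, ← Finset.mul_sum, ← Finset.mul_sum,
      ← sum_inner, real_inner_self_eq_norm_sq, Finset.sum_const, Finset.card_univ,
      Fintype.card_fin, nsmul_eq_mul]
    ring
  have hsplit : ∑ p : Fin m × Fin m, z p = 2 * ∑ p ∈ P, z p := by
    have h1 : ∑ p : Fin m × Fin m, z p
        = ∑ p ∈ P, z p + ∑ p ∈ Finset.univ.filter (fun p : Fin m × Fin m => ¬ p.1 < p.2), z p :=
      (Finset.sum_filter_add_sum_filter_not _ _ _).symm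
    have hsub : Finset.univ.filter (fun p : Fin m × Fin m => p.2 < p.1)
        ⊆ Finset.univ.filter (fun p : Fin m × Fin m => ¬ p.1 < p.2) := by
      intro p hp
      simp only [Finset.mem_filter, Finset.mem_univ, true_and] at hp ⊢
      exact not_lt_of_gt hp
    have h2 : ∑ p ∈ Finset.univ.filter (fun p : Fin m × Fin m => ¬ p.1 < p.2), z p
        = ∑ p ∈ Finset.univ.filter (fun p : Fin m × Fin m => p.2 < p.1), z p := by
      refine (Finset.sum_subset hsub fun p hp1 hp2 => ?_).symm
      simp only [Finset.mem_filter, Finset.mem_univ, true_and, not_lt] at hp1 hp2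
      have hpe : p.1 = p.2 := le_antisymm hp2 hp1
      simp [hzdef, hpe]
    have h3 : ∑ p ∈ Finset.univ.filter (fun p : Fin m × Fin m => p.2 < p.1), z p
        = ∑ p ∈ P, z p := by
      refine Finset.sum_bij' (fun p _ => Prod.swap p) (fun p _ => Prod.swap p) ?_ ?_ ?_ ?_ ?_
      · intro p hp
        simp only [hPdef, Finset.mem_filter, Finset.mem_univ, true_and,
          Prod.fst_swap, Prod.snd_swap] at hp ⊢
        exact hp
      · intro p hp
        simp only [hPdef, Finset.mem_filter, Finset.mem_univ, true_and,
          Prod.fst_swap, Prod.snd_swap] at hp ⊢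
        exact hp
      · intro p _; simp
      · intro p _; simp
      · intro p _
        simp only [hzdef, Prod.fst_swap, Prod.snd_swap]
        rw [norm_sub_rev]
    rw [h1, h2, h3]; ring
  have hE : ∑ p ∈ P, z p ≤ (m : ℝ) * S := by
    have := hsplit ▸ hdouble
    nlinarith [sq_nonneg ‖∑ s, x s‖]
  have hjensen : ∑ p ∈ P, (1 / N) • Real.log (z p)
      ≤ Real.log (∑ p ∈ P, (1 / N) • z p) := by
    refine (StrictConcaveOn.concaveOn strictConcaveOn_log_Ioi).le_map_sum
      (fun p _ => by positivity) ?_ (fun p hp => hzpos p hp)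
    rw [Finset.sum_const, nsmul_eq_mul, hNdef, mul_one_div, div_self]
    exact_mod_cast hNpos.ne'
  have hzsum_pos : 0 < ∑ p ∈ P, z p := by
    refine Finset.sum_pos hzpos ?_
    refine ⟨(⟨0, by omega⟩, ⟨1, by omega⟩), ?_⟩
    rw [hPdef, Finset.mem_filter]
    exact ⟨Finset.mem_univ _, by simp [Fin.lt_def]⟩
  have hlogsum : ∑ p ∈ P, Real.log (z p) ≤ N * Real.log ((∑ p ∈ P, z p) / N) := by
    have h1 : ∑ p ∈ P, (1 / N) • Real.log (z p) = (1 / N) * ∑ p ∈ P, Real.log (z p) := by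
      simp only [smul_eq_mul]; rw [← Finset.mul_sum]
    have h2 : ∑ p ∈ P, (1 / N) • z p = (∑ p ∈ P, z p) / N := by
      simp only [smul_eq_mul]; rw [← Finset.mul_sum, one_div, inv_mul_eq_div]
    rw [h1, h2] at hjensen
    calc ∑ p ∈ P, Real.log (z p) = N * ((1 / N) * ∑ p ∈ P, Real.log (z p)) := by
          field_simp
      _ ≤ N * Real.log ((∑ p ∈ P, z p) / N) := mul_le_mul_of_nonneg_left hjensen hN0.le
  have hstep1 : Real.log ((∑ p ∈ P, z p) / N) ≤ Real.log (4 * S / m) := by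
    apply Real.log_le_log (by positivity)
    have hm1R : (0 : ℝ) < (m : ℝ) - 1 := by linarith
    calc (∑ p ∈ P, z p) / N ≤ (m : ℝ) * S / N := by gcongr
      _ = 2 * S / ((m : ℝ) - 1) := by rw [hNR]; field_simp
      _ ≤ 4 * S / m := by
          rw [div_le_div_iff₀ hm1R hm0R]
          nlinarith
  have hhalf : ∑ p ∈ P, Real.log (z p) = 2 * ∑ p ∈ P, Real.log ‖x p.1 - x p.2‖ := by
    rw [Finset.mul_sum]
    refine Finset.sum_congr rfl fun p _ => ?_
    simp only [hzdef]
    rw [Real.log_pow]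
    push_cast
    ring
  have hsqrtS : 0 < Real.sqrt S := Real.sqrt_pos.mpr hS0
  have hsqrtm : 0 < Real.sqrt m := Real.sqrt_pos.mpr hm0R
  have hsq : ((2 / Real.sqrt m) * Real.sqrt S) ^ 2 = 4 * S / m := by
    rw [mul_pow, div_pow, Real.sq_sqrt hm0R.le, Real.sq_sqrt hS0.le]
    ring
  have hlogR : Real.log ((2 / Real.sqrt m) * Real.sqrt S) = Real.log (4 * S / m) / 2 := by
    have h := Real.log_pow ((2 / Real.sqrt m) * Real.sqrt S) 2
    rw [hsq] at h
    push_cast at h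
    linarith
  rw [hlogR, ← hNR]
  have hfin : ∑ p ∈ P, Real.log (z p) ≤ N * Real.log (4 * S / m) :=
    hlogsum.trans (mul_le_mul_of_nonneg_left hstep1 hN0.le)
  rw [hhalf] at hfin
  linarith
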